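/- Let (b1,...,br) be a sequence of positive integers which is not m-reducible. Then either r < m, or there exist indices k, ℓ with r − m + 1 ≤ k < ℓ ≤ r such that b_k ≤ b_ℓ and b_k < m. -/

import Mathlib

/-- One pass of the Reduction Algorithm with parameter `m`, acting on the last
`m` entries of the sequence, listed in reverse order (i.e. from `a_m` down to
`a_1`), with `Z` the set of still available reducers.  At each step the reducer
is `a` itself if `a < m` and `a ≤ max Z`, and otherwise `max Z`; the algorithm
fails (`none`) if the chosen reducer is no longer available. -/
def redAux (m : ℕ) : List ℕ → Finset ℕ → Option (List ℕ)
  | [], _ => some []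
  | a :: rest, Z =>
    let z := Z.max.getD 0
    let r := if a < m ∧ a ≤ z then a else z
    if r ∈ Z then
      (redAux m rest (Z.erase r)).map (fun cs => (a - r) :: cs)
    else
      none

lemma redAux_none_aux (m : ℕ) : ∀ (L : List ℕ) (Z : Finset ℕ),
    redAux m L Z = none → Z.card = L.length →
    (∃ i j : ℕ, i < j ∧ j < L.length ∧ L.getD j 0 ≤ L.getD i 0 ∧ L.getD j 0 < m) ∨
    (∃ j : ℕ, j < L.length ∧ L.getD j 0 < m ∧ L.getD j 0 ∉ Z) := by
  intro L
  induction L with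
  | nil => intro Z h _; simp [redAux] at h
  | cons a rest ih =>
    intro Z h hcard
    have hne : Z.Nonempty := by
      rw [← Finset.card_pos, hcard]; simp
    have hz : Z.max.getD 0 ∈ Z := by
      obtain ⟨b, hb⟩ := Finset.max_of_nonempty hne
      rw [hb]
      exact Finset.mem_of_max hb
    set z := Z.max.getD 0 with hzdef
    simp only [redAux] at h
    by_cases hc : a < m ∧ a ≤ z
    · -- reducer is a
      simp only [hc, and_self, if_true] at h
      by_cases ha : a ∈ Z
      · simp only [← hzdef, hc, and_self, ha, if_true, Option.map_eq_none_iff] at h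
        have hcard' : (Z.erase a).card = rest.length := by
          rw [Finset.card_erase_of_mem ha, hcard]; simp
        rcases ih (Z.erase a) h hcard' with ⟨i, j, hij, hj, hle, hm⟩ | ⟨j, hj, hm, hnotin⟩
        · exact Or.inl ⟨i + 1, j + 1, by omega, by simpa using hj, by simpa using hle,
            by simpa using hm⟩
        · by_cases hv : rest.getD j 0 = a
          · refine Or.inl ⟨0, j + 1, by omega, by simpa using hj, ?_, by simpa using hm⟩
            simp only [List.getD_cons_succ, List.getD_cons_zero]
            omega
          · refine Or.inr ⟨j + 1, by simpa using hj, by simpa using hm, ?_⟩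
            simp only [List.getD_cons_succ]
            intro hmem
            exact hnotin (Finset.mem_erase.mpr ⟨hv, hmem⟩)
      · exact Or.inr ⟨0, by simp, by simpa using hc.1, by simpa using ha⟩
    · -- reducer is z
      simp only [← hzdef, hc, if_false, hz, if_true, Option.map_eq_none_iff] at h
      have hcard' : (Z.erase z).card = rest.length := by
        rw [Finset.card_erase_of_mem hz, hcard]; simp
      rcases ih (Z.erase z) h hcard' with ⟨i, j, hij, hj, hle, hm⟩ | ⟨j, hj, hm, hnotin⟩
      · exact Or.inl ⟨i + 1, j + 1, by omega, by simpa using hj, by simpa using hle,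
          by simpa using hm⟩
      · by_cases hv : rest.getD j 0 = z
        · refine Or.inl ⟨0, j + 1, by omega, by simpa using hj, ?_, by simpa using hm⟩
          simp only [List.getD_cons_succ, List.getD_cons_zero, hv]
          rcases not_and_or.mp hc with h1 | h1
          · omega
          · omega
        · refine Or.inr ⟨j + 1, by simpa using hj, by simpa using hm, ?_⟩
          simp only [List.getD_cons_succ]
          intro hmem
          exact hnotin (Finset.mem_erase.mpr ⟨hv, hmem⟩)

lemma getD_rev_drop (S : List ℕ) (m j : ℕ) (hm : m ≤ S.length) (hj : j < m) :
    ((S.drop (S.length - m)).reverse).getD j 0 = S.getD (S.length - 1 - j) 0 := by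
  have hdl : (S.drop (S.length - m)).length = m := by simp; omega
  have h1 : j < ((S.drop (S.length - m)).reverse).length := by simp [hdl]; omega
  have h2 : S.length - 1 - j < S.length := by omega
  rw [List.getD_eq_getElem _ _ h1, List.getD_eq_getElem _ _ h2]
  rw [List.getElem_reverse, List.getElem_drop]
  congr 1
  simp [hdl]
  omega

/-- The Reduction Algorithm with parameter `m` applied to a sequence
`S = (b_1, …, b_k, a_1, …, a_m)`.  Returns `some` of the `m`-reduction
`(b_1, …, b_k, c_1, …, c_m)` if `S` is `m`-reducible, and `none` otherwise
(in particular if `S` is shorter than `m`). -/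
def mReduction (m : ℕ) (S : List ℕ) : Option (List ℕ) :=
  if m ≤ S.length then
    (redAux m (S.drop (S.length - m)).reverse (Finset.Icc 1 m)).map
      (fun cs => S.take (S.length - m) ++ cs.reverse)
  else
    none

/-- Lemma 2.9 (lem:redfails): if a sequence `S = (b_1, …, b_r)` of positive
integers is not `m`-reducible, then either `r < m`, or (in 0-indexed form)
there are indices `k < ℓ < r` with `r − m ≤ k`, `b_k ≤ b_ℓ` and `b_k < m`. -/
theorem redfails (m : ℕ) (S : List ℕ)
    (hpos : ∀ x ∈ S, 0 < x) (h : mReduction m S = none) :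
    S.length < m ∨
      ∃ k ℓ : ℕ, S.length - m ≤ k ∧ k < ℓ ∧ ℓ < S.length ∧
        S.getD k 0 ≤ S.getD ℓ 0 ∧ S.getD k 0 < m := by
  by_cases hm : m ≤ S.length
  · right
    unfold mReduction at h
    simp only [hm, if_true, Option.map_eq_none_iff] at h
    have hLlen : ((S.drop (S.length - m)).reverse).length = m := by simp; omega
    have hcard : (Finset.Icc 1 m).card = ((S.drop (S.length - m)).reverse).length := by
      simp [hLlen]
    rcases redAux_none_aux m _ _ h hcard with ⟨i, j, hij, hj, hle, hml⟩ | ⟨j, hj, hml, hnotin⟩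
    · rw [hLlen] at hj
      refine ⟨S.length - 1 - j, S.length - 1 - i, by omega, by omega, by omega, ?_, ?_⟩
      · rw [← getD_rev_drop S m j hm (by omega), ← getD_rev_drop S m i hm (by omega)]
        exact hle
      · rw [← getD_rev_drop S m j hm (by omega)]
        exact hml
    · exfalso
      rw [hLlen] at hj
      rw [getD_rev_drop S m j hm hj] at hml hnotin
      have h2 : S.length - 1 - j < S.length := by omega
      rw [List.getD_eq_getElem _ _ h2] at hml hnotin
      have := hpos _ (List.getElem_mem h2)
      exact hnotin (Finset.mem_Icc.mpr ⟨by omega, by omega⟩)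
  · left; omega
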